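/- A bipartite graph G has a perfect matching if and only if the intersection of all maximum stable sets of G is empty. -/

import Mathlib

open Finset

variable {V : Type*}

/-- A stable (independent) set of vertices. -/
def IsStableSet (G : SimpleGraph V) (s : Finset V) : Prop :=
  ∀ x ∈ s, ∀ y ∈ s, ¬ G.Adj x y

/-- The stability number α(G). -/
noncomputable def stabNum (G : SimpleGraph V) : ℕ :=
  sSup {n | ∃ s : Finset V, IsStableSet G s ∧ s.card = n}

/-- A matching: a set of edges of `G`, pairwise vertex-disjoint. -/
def IsMatchingSet (G : SimpleGraph V) (M : Finset (Sym2 V)) : Prop :=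
  (∀ e ∈ M, e ∈ G.edgeSet) ∧
    ∀ e ∈ M, ∀ f ∈ M, e ≠ f → ∀ v : V, v ∈ e → v ∉ f

/-- The matching number μ(G). -/
noncomputable def matchNum (G : SimpleGraph V) : ℕ :=
  sSup {n | ∃ M : Finset (Sym2 V), IsMatchingSet G M ∧ M.card = n}

/-- A maximum stable set. -/
def IsMaxStableSet (G : SimpleGraph V) (s : Finset V) : Prop :=
  IsStableSet G s ∧ s.card = stabNum G

/-- A maximum matching. -/
def IsMaxMatching (G : SimpleGraph V) (M : Finset (Sym2 V)) : Prop :=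
  IsMatchingSet G M ∧ M.card = matchNum G

/-- A perfect matching: a matching covering all vertices. -/
def IsPerfectMatchingSet (G : SimpleGraph V) (M : Finset (Sym2 V)) : Prop :=
  IsMatchingSet G M ∧ ∀ v : V, ∃ e ∈ M, v ∈ e

def HasPerfectMatching (G : SimpleGraph V) : Prop :=
  ∃ M, IsPerfectMatchingSet G M

/-- A near-perfect matching: exactly one vertex is uncovered. -/
def HasNearPerfectMatching (G : SimpleGraph V) : Prop :=
  ∃ M, IsMatchingSet G M ∧
    ∃ u : V, (∀ e ∈ M, u ∉ e) ∧ ∀ v : V, v ≠ u → ∃ e ∈ M, v ∈ e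

/-- A König-Egerváry graph: α(G) + μ(G) = |V(G)|. -/
def KonigEgervary (G : SimpleGraph V) : Prop :=
  stabNum G + matchNum G = Nat.card V

/-- G is α⁺-stable: adding any new edge leaves the stability number unchanged. -/
def AlphaPlusStable (G : SimpleGraph V) : Prop :=
  ∀ u v : V, u ≠ v → ¬ G.Adj u v →
    stabNum (G ⊔ SimpleGraph.fromEdgeSet {s(u, v)}) = stabNum G

/-- A blossom relative to the matching `M`: an odd cycle `x₀x₁…x₂ₖx₀` whose edges
`x₁x₂, x₃x₄, …, x₂ₖ₋₁x₂ₖ` belong to `M`. -/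
def HasBlossom (G : SimpleGraph V) (M : Finset (Sym2 V)) : Prop :=
  ∃ k : ℕ, 0 < k ∧ ∃ x : ℕ → V,
    (∀ i, i ≤ 2 * k → ∀ j, j ≤ 2 * k → x i = x j → i = j) ∧
    (∀ i < 2 * k, G.Adj (x i) (x (i + 1))) ∧
    G.Adj (x (2 * k)) (x 0) ∧
    ∀ i < k, s(x (2 * i + 1), x (2 * i + 2)) ∈ M

/-- G is blossom-free: no blossom relative to any maximum matching. -/
def BlossomFree (G : SimpleGraph V) : Prop :=
  ∀ M : Finset (Sym2 V), IsMaxMatching G M → ¬ HasBlossom G M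

/-! ### Auxiliary lemmas -/

section Aux

variable [Fintype V] [DecidableEq V]

lemma stab_bddAbove (G : SimpleGraph V) :
    BddAbove {n | ∃ s : Finset V, IsStableSet G s ∧ s.card = n} := by
  refine ⟨Fintype.card V, ?_⟩
  rintro n ⟨s, -, rfl⟩
  exact s.card_le_univ

lemma card_le_stabNum {G : SimpleGraph V} {s : Finset V} (hs : IsStableSet G s) :
    s.card ≤ stabNum G :=
  le_csSup (stab_bddAbove G) ⟨s, hs, rfl⟩

lemma exists_maxStableSet (G : SimpleGraph V) : ∃ S : Finset V, IsMaxStableSet G S := by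
  have hne : (∅ : Finset V).card ∈ {n | ∃ s : Finset V, IsStableSet G s ∧ s.card = n} :=
    ⟨∅, fun x hx => absurd hx (notMem_empty x), rfl⟩
  obtain ⟨s, hs, hc⟩ := Nat.sSup_mem ⟨_, hne⟩ (stab_bddAbove G)
  exact ⟨s, hs, hc⟩

lemma adj_of_mem_edge {G : SimpleGraph V} {e : Sym2 V} (he : e ∈ G.edgeSet)
    {x y : V} (hx : x ∈ e) (hy : y ∈ e) (hne : x ≠ y) : G.Adj x y := by
  induction e using Sym2.ind with
  | _ p q =>
    rw [Sym2.mem_iff] at hx hy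
    rw [SimpleGraph.mem_edgeSet] at he
    rcases hx with rfl | rfl <;> rcases hy with rfl | rfl
    · exact absurd rfl hne
    · exact he
    · exact he.symm
    · exact absurd rfl hne

/-- The neighbourhood of a finite set of vertices. -/
def nbhd (G : SimpleGraph V) [DecidableRel G.Adj] (X : Finset V) : Finset V :=
  X.biUnion fun a => univ.filter (G.Adj a)

lemma mem_nbhd {G : SimpleGraph V} [DecidableRel G.Adj] {X : Finset V} {b : V} :
    b ∈ nbhd G X ↔ ∃ a ∈ X, G.Adj a b := by
  simp [nbhd]

lemma nbhd_union (G : SimpleGraph V) [DecidableRel G.Adj] (X Y : Finset V) :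
    nbhd G (X ∪ Y) = nbhd G X ∪ nbhd G Y := by
  ext b
  simp only [mem_nbhd, mem_union]
  constructor
  · rintro ⟨a, ha | ha, hadj⟩
    · exact Or.inl ⟨a, ha, hadj⟩
    · exact Or.inr ⟨a, ha, hadj⟩
  · rintro (⟨a, ha, hadj⟩ | ⟨a, ha, hadj⟩)
    · exact ⟨a, Or.inl ha, hadj⟩
    · exact ⟨a, Or.inr ha, hadj⟩

lemma nbhd_inter_subset (G : SimpleGraph V) [DecidableRel G.Adj] (X Y : Finset V) :
    nbhd G (X ∩ Y) ⊆ nbhd G X ∩ nbhd G Y := by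
  intro b hb
  obtain ⟨a, ha, hadj⟩ := mem_nbhd.1 hb
  exact mem_inter.2 ⟨mem_nbhd.2 ⟨a, mem_of_mem_inter_left ha, hadj⟩,
    mem_nbhd.2 ⟨a, mem_of_mem_inter_right ha, hadj⟩⟩

/-- If the intersection of all maximum stable sets is empty, then Hall's condition
holds for each colour class of a bipartite graph. -/
lemma hall_of_core (G : SimpleGraph V) [DecidableRel G.Adj] (C : V → Bool)
    (hC : ∀ ⦃x y⦄, G.Adj x y → C x ≠ C y)
    (hcore : ∀ v : V, ∃ S, IsMaxStableSet G S ∧ v ∉ S)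
    (c : Bool) (X : Finset V) (hXA : ∀ a ∈ X, C a = c) :
    X.card ≤ (nbhd G X).card := by
  by_contra hlt
  push_neg at hlt
  set A : Finset V := univ.filter (fun v => C v = c) with hA
  set B : Finset V := univ.filter (fun v => C v ≠ c) with hB
  set d : Finset V → ℤ := fun Y => (Y.card : ℤ) - ((nbhd G Y).card : ℤ) with hd
  have hXpow : X ∈ A.powerset :=
    mem_powerset.2 fun a ha => mem_filter.2 ⟨mem_univ _, hXA a ha⟩
  obtain ⟨X0, hX0, hX0max⟩ := (A.powerset).exists_max_image d ⟨X, hXpow⟩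
  set F : Finset (Finset V) := (A.powerset).filter (fun Y => d Y = d X0) with hF
  obtain ⟨Xm, hXmF, hXmmin⟩ :=
    F.exists_min_image (fun Y => Y.card) ⟨X0, mem_filter.2 ⟨hX0, rfl⟩⟩
  have hXmA : Xm ⊆ A := mem_powerset.1 (mem_filter.1 hXmF).1
  have hXmd : d Xm = d X0 := (mem_filter.1 hXmF).2
  have hdpos : 0 < d X0 := by
    refine lt_of_lt_of_le ?_ (hX0max X hXpow)
    simp only [hd]
    omega
  -- Xm is nonempty
  have hXmne : Xm.Nonempty := by
    rcases Xm.eq_empty_or_nonempty with rfl | h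
    · exfalso
      have : d (∅ : Finset V) = 0 := by simp [hd, nbhd]
      rw [this] at hXmd
      omega
    · exact h
  obtain ⟨v, hv⟩ := hXmne
  obtain ⟨S, ⟨hSst, hScard⟩, hvS⟩ := hcore v
  -- submodularity: intersections of maximizers are maximizers, hence Xm ⊆ any maximizer
  have hmaxint : ∀ Y ∈ A.powerset, d Y = d X0 → Xm ⊆ Y := by
    intro Y hY hdY
    have hYA : Y ⊆ A := mem_powerset.1 hY
    have hunion : Xm ∪ Y ∈ A.powerset := mem_powerset.2 (union_subset hXmA hYA)
    have hinter : Xm ∩ Y ∈ A.powerset :=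
      mem_powerset.2 (Subset.trans inter_subset_left hXmA)
    have h1 : d (Xm ∪ Y) ≤ d X0 := hX0max _ hunion
    have h2 : d (Xm ∩ Y) ≤ d X0 := hX0max _ hinter
    have hsum : d Xm + d Y ≤ d (Xm ∪ Y) + d (Xm ∩ Y) := by
      have hcards : (Xm ∪ Y).card + (Xm ∩ Y).card = Xm.card + Y.card :=
        card_union_add_card_inter Xm Y
      have hn1 : (nbhd G (Xm ∪ Y)).card + (nbhd G (Xm ∩ Y)).card ≤
          (nbhd G Xm).card + (nbhd G Y).card := by
        rw [nbhd_union G Xm Y]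
        have e2 : (nbhd G (Xm ∩ Y)).card ≤ (nbhd G Xm ∩ nbhd G Y).card :=
          card_le_card (nbhd_inter_subset G Xm Y)
        have := card_union_add_card_inter (nbhd G Xm) (nbhd G Y)
        omega
      simp only [hd]
      push_cast
      omega
    have hdint : d (Xm ∩ Y) = d X0 := by omega
    have hmem : Xm ∩ Y ∈ F := mem_filter.2 ⟨hinter, hdint⟩
    have hcard : Xm.card ≤ (Xm ∩ Y).card := hXmmin _ hmem
    have heq : Xm ∩ Y = Xm := eq_of_subset_of_card_le inter_subset_left hcard
    intro a ha
    rw [← heq] at ha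
    exact mem_of_mem_inter_right ha
  -- neighbourhoods of subsets of A lie in B
  have hNB : ∀ Y : Finset V, (∀ a ∈ Y, C a = c) → nbhd G Y ⊆ B := by
    intro Y hY b hb
    obtain ⟨a, ha, hadj⟩ := mem_nbhd.1 hb
    refine mem_filter.2 ⟨mem_univ _, ?_⟩
    intro hbc
    exact hC hadj (by rw [hY a ha, hbc])
  have hXmC : ∀ a ∈ Xm, C a = c := fun a ha => (mem_filter.1 (hXmA ha)).2
  -- lower bound: α ≥ |B| + d X0
  have hT : IsStableSet G (Xm ∪ (B \ nbhd G Xm)) := by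
    intro x hx y hy hadj
    rcases mem_union.1 hx with hx' | hx' <;> rcases mem_union.1 hy with hy' | hy'
    · exact hC hadj (by rw [hXmC x hx', hXmC y hy'])
    · exact (mem_sdiff.1 hy').2 (mem_nbhd.2 ⟨x, hx', hadj⟩)
    · exact (mem_sdiff.1 hx').2 (mem_nbhd.2 ⟨y, hy', hadj.symm⟩)
    · have h1 : C x ≠ c := (mem_filter.1 (mem_sdiff.1 hx').1).2
      have h2 : C y ≠ c := (mem_filter.1 (mem_sdiff.1 hy').1).2
      exact hC hadj (by cases hcx : C x <;> cases hcy : C y <;> simp_all)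
  have hNXmB : nbhd G Xm ⊆ B := hNB Xm hXmC
  have hdisjT : Disjoint Xm (B \ nbhd G Xm) := by
    rw [disjoint_left]
    intro a ha hb
    have h1 : C a = c := hXmC a ha
    have h2 : C a ≠ c := (mem_filter.1 (mem_sdiff.1 hb).1).2
    exact h2 h1
  have hcardT : ((Xm ∪ (B \ nbhd G Xm)).card : ℤ) = (B.card : ℤ) + d Xm := by
    rw [card_union_of_disjoint hdisjT, card_sdiff_of_subset hNXmB]
    have := card_le_card hNXmB
    simp only [hd]
    push_cast
    omega
  have hαlb : (B.card : ℤ) + d X0 ≤ (stabNum G : ℤ) := by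
    have := card_le_stabNum hT
    rw [← hXmd, ← hcardT]
    exact_mod_cast this
  -- upper bound via the maximum stable set S
  set XS : Finset V := S.filter (fun v => C v = c) with hXS
  set YS : Finset V := S.filter (fun v => ¬ C v = c) with hYS
  have hcardS : XS.card + YS.card = S.card :=
    card_filter_add_card_filter_not _
  have hXSC : ∀ a ∈ XS, C a = c := fun a ha => (mem_filter.1 ha).2
  have hNXSB : nbhd G XS ⊆ B := hNB XS hXSC
  have hYSsub : YS ⊆ B \ nbhd G XS := by
    intro y hy
    refine mem_sdiff.2 ⟨mem_filter.2 ⟨mem_univ _, (mem_filter.1 hy).2⟩, ?_⟩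
    intro hyn
    obtain ⟨a, ha, hadj⟩ := mem_nbhd.1 hyn
    exact hSst a (mem_of_mem_filter a ha) y (mem_of_mem_filter y hy) hadj
  have hSub : (S.card : ℤ) ≤ (B.card : ℤ) + d XS := by
    have h1 : YS.card ≤ (B \ nbhd G XS).card := card_le_card hYSsub
    rw [card_sdiff_of_subset hNXSB] at h1
    have h2 := card_le_card hNXSB
    simp only [hd]
    push_cast
    omega
  have hXSpow : XS ∈ A.powerset :=
    mem_powerset.2 fun a ha => mem_filter.2 ⟨mem_univ _, hXSC a ha⟩
  have hdXS : d XS ≤ d X0 := hX0max _ hXSpow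
  have hdXSeq : d XS = d X0 := by
    have : (S.card : ℤ) = (stabNum G : ℤ) := by exact_mod_cast hScard
    omega
  have : Xm ⊆ XS := hmaxint XS hXSpow hdXSeq
  exact hvS (mem_of_mem_filter v (this hv))

/-- From the empty-core hypothesis, build a perfect matching. -/
lemma pm_of_core (G : SimpleGraph V) [DecidableRel G.Adj] (C : V → Bool)
    (hC : ∀ ⦃x y⦄, G.Adj x y → C x ≠ C y)
    (hcore : ∀ v : V, ∃ S, IsMaxStableSet G S ∧ v ∉ S) :
    HasPerfectMatching G := by
  have hall : ∀ c : Bool, ∃ f : {v : V // C v = c} → V,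
      Function.Injective f ∧ ∀ a, G.Adj a.1 (f a) := by
    intro c
    have hH := (Finset.all_card_le_biUnion_card_iff_exists_injective
      (fun a : {v : V // C v = c} => univ.filter (G.Adj a.1))).1 ?_
    · obtain ⟨f, hinj, hmem⟩ := hH
      exact ⟨f, hinj, fun a => (mem_filter.1 (hmem a)).2⟩
    · intro s
      have hbu : s.biUnion (fun a => univ.filter (G.Adj a.1)) =
          nbhd G (s.image Subtype.val) := by
        rw [nbhd, image_biUnion]
      rw [hbu]
      have hcards : (s.image Subtype.val).card = s.card :=
        card_image_of_injective s Subtype.val_injective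
      rw [← hcards]
      refine hall_of_core G C hC hcore c _ ?_
      intro a ha
      obtain ⟨b, _, rfl⟩ := mem_image.1 ha
      exact b.2
  obtain ⟨f, hfinj, hfadj⟩ := hall true
  obtain ⟨g, hginj, hgadj⟩ := hall false
  have hfc : ∀ a : {v : V // C v = true}, C (f a) = false := by
    intro a
    have h1 := hC (hfadj a)
    rw [a.2] at h1
    cases h : C (f a)
    · rfl
    · exact absurd h.symm h1
  have hgc : ∀ a : {v : V // C v = false}, C (g a) = true := by
    intro a
    have h1 := hC (hgadj a)
    rw [a.2] at h1
    cases h : C (g a)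
    · exact absurd h.symm h1
    · rfl
  set Ft : {v : V // C v = true} → {v : V // C v = false} := fun a => ⟨f a, hfc a⟩ with hFt
  have hFtinj : Function.Injective Ft := by
    intro a b h
    exact hfinj (congrArg Subtype.val h)
  have hGtinj : Function.Injective
      (fun a : {v : V // C v = false} => (⟨g a, hgc a⟩ : {v : V // C v = true})) := by
    intro a b h
    exact hginj (congrArg Subtype.val h)
  have hcard : Fintype.card {v : V // C v = true} = Fintype.card {v : V // C v = false} :=
    le_antisymm (Fintype.card_le_of_injective Ft hFtinj)
      (Fintype.card_le_of_injective _ hGtinj)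
  have hFtbij : Function.Bijective Ft :=
    (Fintype.bijective_iff_injective_and_card Ft).2 ⟨hFtinj, hcard⟩
  refine ⟨univ.image (fun a : {v : V // C v = true} => s(a.1, f a)), ⟨?_, ?_⟩, ?_⟩
  · intro e he
    obtain ⟨a, -, rfl⟩ := mem_image.1 he
    exact (SimpleGraph.mem_edgeSet G).2 (hfadj a)
  · intro e he e' he' hne w hwe hwe'
    obtain ⟨a, -, rfl⟩ := mem_image.1 he
    obtain ⟨b, -, rfl⟩ := mem_image.1 he'
    have hab : a ≠ b := by rintro rfl; exact hne rfl
    have h1 : a.1 ≠ b.1 := fun h => hab (Subtype.ext h)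
    have h2 : a.1 ≠ f b := by
      intro h
      have := hfc b
      rw [← h, a.2] at this
      exact Bool.noConfusion this
    have h3 : f a ≠ b.1 := by
      intro h
      have := hfc a
      rw [h, b.2] at this
      exact Bool.noConfusion this
    have h4 : f a ≠ f b := fun h => hab (hfinj h)
    rw [Sym2.mem_iff] at hwe hwe'
    rcases hwe with rfl | rfl <;> rcases hwe' with h' | h'
    · exact h1 h'
    · exact h2 h'
    · exact h3 h'
    · exact h4 h'
  · intro v
    cases hcv : C v
    · obtain ⟨a, ha⟩ := hFtbij.2 ⟨v, hcv⟩
      refine ⟨s(a.1, f a), mem_image_of_mem _ (mem_univ a), ?_⟩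
      have : f a = v := congrArg Subtype.val ha
      rw [Sym2.mem_iff]
      exact Or.inr this.symm
    · refine ⟨s((⟨v, hcv⟩ : {v : V // C v = true}).1, f ⟨v, hcv⟩),
        mem_image_of_mem _ (mem_univ _), ?_⟩
      rw [Sym2.mem_iff]
      exact Or.inl rfl

/-- With a perfect matching, each colour class is a maximum stable set. -/
lemma colorClass_maxStable (G : SimpleGraph V) (C : V → Bool)
    (hC : ∀ ⦃x y⦄, G.Adj x y → C x ≠ C y)
    (M : Finset (Sym2 V)) (hM : IsMatchingSet G M) (hcov : ∀ v : V, ∃ e ∈ M, v ∈ e)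
    (c : Bool) : IsMaxStableSet G (univ.filter (fun v => C v = c)) := by
  set A : Finset V := univ.filter (fun v => C v = c) with hA
  have hAst : IsStableSet G A := by
    intro x hx y hy hadj
    exact hC hadj (by rw [(mem_filter.1 hx).2, (mem_filter.1 hy).2])
  -- every stable set has at most |M| elements
  have hstep1 : ∀ s : Finset V, IsStableSet G s → s.card ≤ M.card := by
    intro s hs
    have hchoose : ∀ x : V, ∃ e, e ∈ M ∧ x ∈ e := by
      intro x
      obtain ⟨e, he, hx⟩ := hcov x
      exact ⟨e, he, hx⟩
    refine card_le_card_of_injOn (fun x => (hchoose x).choose)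
      (fun x _ => ((hchoose x).choose_spec).1) ?_
    intro x hx y hy hxy
    by_contra hne
    have he : (hchoose x).choose ∈ G.edgeSet := hM.1 _ ((hchoose x).choose_spec).1
    have hxe : x ∈ (hchoose x).choose := ((hchoose x).choose_spec).2
    have hxy' : (hchoose x).choose = (hchoose y).choose := hxy
    have hye : y ∈ (hchoose x).choose := by
      rw [hxy']
      exact ((hchoose y).choose_spec).2
    exact hs x hx y hy (adj_of_mem_edge he hxe hye hne)
  -- |M| ≤ |A|
  have hpick : ∀ e ∈ M, ∃ x, x ∈ e ∧ C x = c := by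
    intro e he
    have hedge := hM.1 e he
    induction e using Sym2.ind with
    | _ p q =>
      rw [SimpleGraph.mem_edgeSet] at hedge
      have hpq := hC hedge
      rcases Bool.eq_or_eq_not (C p) c with h | h
      · exact ⟨p, by rw [Sym2.mem_iff]; exact Or.inl rfl, h⟩
      · refine ⟨q, by rw [Sym2.mem_iff]; exact Or.inr rfl, ?_⟩
        cases hq : C q <;> cases hc : c <;> simp_all
  have hstep2 : M.card ≤ A.card := by
    classical
    rcases isEmpty_or_nonempty V with hV | hV
    · haveI : IsEmpty (Sym2 V) := ⟨fun e => Sym2.ind (fun p _ => (hV.false p).elim) e⟩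
      simp [Finset.eq_empty_of_isEmpty M]
    have hch : ∀ e : Sym2 V, e ∈ M → ∃ x, x ∈ e ∧ C x = c := hpick
    refine card_le_card_of_injOn
      (fun e => if he : e ∈ M then (hch e he).choose else Classical.arbitrary V) ?_ ?_
    · intro e he
      simp only [mem_coe] at he
      simp only [he, dif_pos]
      exact mem_filter.2 ⟨mem_univ _, ((hch e he).choose_spec).2⟩
    · intro e he e' he' heq
      simp only [mem_coe] at he he'
      simp only [he, he', dif_pos] at heq
      by_contra hne
      have h1 : (hch e he).choose ∈ e := ((hch e he).choose_spec).1
      have h2 : (hch e' he').choose ∈ e' := ((hch e' he').choose_spec).1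
      rw [← heq] at h2
      exact hM.2 e he e' he' hne _ h1 h2
  obtain ⟨S, hSst, hScard⟩ := exists_maxStableSet G
  have h1 : stabNum G ≤ M.card := hScard ▸ hstep1 S hSst
  have h2 : A.card ≤ stabNum G := card_le_stabNum hAst
  exact ⟨hAst, le_antisymm h2 (le_trans h1 hstep2)⟩

end Aux

theorem stmt_14 [Fintype V] (G : SimpleGraph V)
    (hbip : G.Colorable 2) :
    HasPerfectMatching G ↔
      {v : V | ∀ S : Finset V, IsMaxStableSet G S → v ∈ S} = ∅ := by
  classical
  obtain ⟨Col⟩ := hbip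
  set C : V → Bool := fun v => decide (Col v = 1) with hCdef
  have hC : ∀ ⦃x y⦄, G.Adj x y → C x ≠ C y := by
    intro x y hxy hc
    have key : ∀ a b : Fin 2, decide (a = 1) = decide (b = 1) → a = b := by decide
    exact Col.valid hxy (key _ _ hc)
  constructor
  · rintro ⟨M, hM, hMcov⟩
    rw [Set.eq_empty_iff_forall_notMem]
    intro v hv
    have hmax := colorClass_maxStable G C hC M hM hMcov (!(C v))
    have hvmem := hv _ hmax
    have : C v = !(C v) := (mem_filter.1 hvmem).2
    cases h : C v <;> rw [h] at this <;> exact Bool.noConfusion this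
  · intro hcore
    apply pm_of_core G C hC
    intro v
    have hv : v ∉ ({v : V | ∀ S : Finset V, IsMaxStableSet G S → v ∈ S} : Set V) := by
      rw [hcore]; exact Set.notMem_empty v
    simp only [Set.mem_setOf_eq, not_forall] at hv
    obtain ⟨S, hS, hvS⟩ := hv
    exact ⟨S, hS, hvS⟩
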